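/- For every even natural number n ≥ 4, the set of nonzero integer vectors lying in the profile of the Gröbner cone C = cone((2,0,1), (0,0,1), (2,n−2,n−1)) of the D_n-singularity, i.e. the set of nonzero (a,b,c) ∈ ℤ³ that lie in C and satisfy c − b ≤ 1, is exactly {(0,0,1)} ∪ {(1,k,k+1) : k ∈ ℤ, 0 ≤ k ≤ (n−2)/2} ∪ {(2,k,k+1) : k ∈ ℤ, 0 ≤ k ≤ n−2}. -/

import Mathlib

/-- The cone generated by three vectors in `ℝ³`. -/
def coneGen3 (v₁ v₂ v₃ : Fin 3 → ℝ) : Set (Fin 3 → ℝ) :=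
  {w | ∃ a b c : ℝ, 0 ≤ a ∧ 0 ≤ b ∧ 0 ≤ c ∧ w = a • v₁ + b • v₂ + c • v₃}

lemma mem_cone_iff (n : ℝ) (hn : 2 < n) (w : Fin 3 → ℝ) :
    w ∈ coneGen3 ![2, 0, 1] ![0, 0, 1] ![2, n - 2, n - 1] ↔
      0 ≤ w 0 ∧ 0 ≤ w 1 ∧ w 0 + 2 * w 1 ≤ 2 * w 2 ∧ 2 * w 1 ≤ (n - 2) * w 0 := by
  have hn2 : (0:ℝ) < n - 2 := by linarith
  constructor
  · rintro ⟨a, b, c, ha, hb, hc, rfl⟩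
    simp only [Pi.add_apply, Pi.smul_apply, Matrix.cons_val_zero, Matrix.cons_val_one,
      Matrix.head_cons, Matrix.cons_val_two, Matrix.tail_cons, smul_eq_mul]
    refine ⟨by nlinarith, by nlinarith, by nlinarith, by nlinarith⟩
  · rintro ⟨h0, h1, h2, h3⟩
    refine ⟨((n - 2) * w 0 - 2 * w 1) / (2 * (n - 2)), w 2 - w 0 / 2 - w 1, w 1 / (n - 2),
      div_nonneg (by linarith) (by linarith), ?_, ?_, ?_⟩
    · linarith
    · positivity
    · funext i
      fin_cases i
      · show w 0 = _
        simp only [Pi.add_apply, Pi.smul_apply, Matrix.cons_val_zero, Matrix.cons_val_one,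
          Matrix.head_cons, Matrix.cons_val_two, Matrix.tail_cons, smul_eq_mul, Fin.reduceFinMk, Fin.isValue]
        field_simp; ring
      · show w 1 = _
        simp only [Pi.add_apply, Pi.smul_apply, Matrix.cons_val_zero, Matrix.cons_val_one,
          Matrix.head_cons, Matrix.cons_val_two, Matrix.tail_cons, smul_eq_mul, Fin.reduceFinMk, Fin.isValue]
        field_simp; ring
      · show w 2 = _
        simp only [Pi.add_apply, Pi.smul_apply, Matrix.cons_val_zero, Matrix.cons_val_one,
          Matrix.head_cons, Matrix.cons_val_two, Matrix.tail_cons, smul_eq_mul, Fin.reduceFinMk, Fin.isValue]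
        field_simp; ring

lemma eq_vec3 (v : Fin 3 → ℤ) (x y z : ℤ) :
    v = ![x, y, z] ↔ v 0 = x ∧ v 1 = y ∧ v 2 = z := by
  constructor
  · rintro rfl; simp
  · rintro ⟨h0, h1, h2⟩
    funext i; fin_cases i <;> simpa

/-- For even `n ≥ 4`, the nonzero integer points of the profile of the Gröbner
cone `cone((2,0,1), (0,0,1), (2,n-2,n-1))` of the `D_n`-singularity (the points of
the cone with `z - y ≤ 1`) are exactly `(0,0,1)`, the `(1,k,k+1)` with
`0 ≤ k ≤ (n-2)/2`, and the `(2,k,k+1)` with `0 ≤ k ≤ n-2`. -/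
theorem Dn_profile_points_even (n : ℕ) (hn : 4 ≤ n) (heven : Even n) :
    {v : Fin 3 → ℤ | v ≠ 0 ∧
        (fun i => (v i : ℝ)) ∈
          coneGen3 ![2, 0, 1] ![0, 0, 1] ![2, (n : ℝ) - 2, (n : ℝ) - 1] ∧
        v 2 - v 1 ≤ 1} =
      {v | v = ![0, 0, 1] ∨
        (∃ k : ℤ, 0 ≤ k ∧ 2 * k ≤ (n : ℤ) - 2 ∧ v = ![1, k, k + 1]) ∨
        (∃ k : ℤ, 0 ≤ k ∧ k ≤ (n : ℤ) - 2 ∧ v = ![2, k, k + 1])} := by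
  have hn2 : (2:ℝ) < (n : ℝ) := by exact_mod_cast by omega
  have hnz : (4:ℤ) ≤ (n:ℤ) := by exact_mod_cast hn
  ext v
  simp only [Set.mem_setOf_eq, mem_cone_iff (n:ℝ) hn2, eq_vec3]
  have hne : v ≠ 0 ↔ ¬(v 0 = 0 ∧ v 1 = 0 ∧ v 2 = 0) := by
    rw [not_and, not_and]
    constructor
    · intro h h0 h1 h2
      exact h (funext fun i => by fin_cases i <;> assumption)
    · intro h hv
      subst hv
      exact h rfl rfl rfl
  rw [hne]
  have cast_iff : (0 ≤ ((v 0 : ℤ) : ℝ) ∧ 0 ≤ ((v 1 : ℤ) : ℝ) ∧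
      ((v 0 : ℤ) : ℝ) + 2 * ((v 1 : ℤ) : ℝ) ≤ 2 * ((v 2 : ℤ) : ℝ) ∧
      2 * ((v 1 : ℤ) : ℝ) ≤ ((n : ℝ) - 2) * ((v 0 : ℤ) : ℝ)) ↔
      (0 ≤ v 0 ∧ 0 ≤ v 1 ∧ v 0 + 2 * v 1 ≤ 2 * v 2 ∧ 2 * v 1 ≤ ((n:ℤ) - 2) * v 0) := by
    push_cast
    constructor <;> exact fun ⟨a, b, c, d⟩ => ⟨by exact_mod_cast a, by exact_mod_cast b,
      by exact_mod_cast c, by exact_mod_cast d⟩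
  rw [cast_iff]
  constructor
  · rintro ⟨h0, ⟨ha, hb, hc, hd⟩, hp⟩
    have ha2 : v 0 ≤ 2 := by nlinarith
    interval_cases h : (v 0)
    · left; omega
    · right; left; exact ⟨v 1, by omega, by omega, rfl, rfl, by omega⟩
    · right; right; exact ⟨v 1, by omega, by nlinarith, rfl, rfl, by omega⟩
  · rintro (⟨h0, h1, h2⟩ | ⟨k, hk0, hk, h0, h1, h2⟩ | ⟨k, hk0, hk, h0, h1, h2⟩) <;>
      refine ⟨by omega, ⟨by omega, by omega, by omega, by nlinarith⟩, by omega⟩
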